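/- Restricting softmax sampling to a top-k subset breaks the differential privacy guarantee: there exist logit vectors u, u' ∈ [b₁, b₂]^V (V ≥ k+1) such that some token v has positive probability under top-k temperature sampling from u but zero probability under top-k temperature sampling from u'; hence no finite ε makes the top-k mechanism ε-PureLDP. -/
import Mathlib


theorem top_k_sampling_breaks_dp (V k : ℕ) (hk : 1 ≤ k) (hkV : k + 1 ≤ V)
    (b₁ b₂ T : ℝ) (hb : b₁ < b₂) (hT : 0 < T)
    (topk : (Fin V → ℝ) → Finset (Fin V))
    (hcard : ∀ u, (topk u).card = k)
    (htop : ∀ u, ∀ i ∈ topk u, ∀ j ∉ topk u, u j ≤ u i)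
    (P : (Fin V → ℝ) → Fin V → ℝ)
    (hP : ∀ u v, P u v =
      if v ∈ topk u then Real.exp (u v / T) / ∑ j ∈ topk u, Real.exp (u j / T)
      else 0) :
    (∃ u u' : Fin V → ℝ,
      (∀ i, u i ∈ Set.Icc b₁ b₂) ∧ (∀ i, u' i ∈ Set.Icc b₁ b₂) ∧
      ∃ v : Fin V, 0 < P u v ∧ P u' v = 0) ∧
    ∀ ε : ℝ, ¬ (∀ u u' : Fin V → ℝ,
      (∀ i, u i ∈ Set.Icc b₁ b₂) → (∀ i, u' i ∈ Set.Icc b₁ b₂) →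
      ∀ v : Fin V, P u v ≤ Real.exp ε * P u' v) := by
  have hV : 0 < V := by omega
  set v : Fin V := ⟨0, hV⟩ with hv
  set u : Fin V → ℝ := fun i => if i = v then b₂ else b₁ with hu
  set u' : Fin V → ℝ := fun i => if i = v then b₁ else b₂ with hu'
  have hub : ∀ i, u i ∈ Set.Icc b₁ b₂ := by
    intro i; dsimp [u]; split <;> constructor <;> linarith
  have hub' : ∀ i, u' i ∈ Set.Icc b₁ b₂ := by
    intro i; dsimp [u']; split <;> constructor <;> linarith
  -- v ∈ topk u
  have hvin : v ∈ topk u := by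
    by_contra hvn
    have hne : (topk u).Nonempty := by
      rw [← Finset.card_pos, hcard]; omega
    obtain ⟨i, hi⟩ := hne
    have := htop u i hi v hvn
    have hiv : i ≠ v := fun h => hvn (h ▸ hi)
    simp only [u, if_pos rfl, if_neg hiv] at this
    linarith
  -- v ∉ topk u'
  have hvout : v ∉ topk u' := by
    intro hvin'
    have hlt : (topk u').card < V := by rw [hcard]; omega
    obtain ⟨j, hj⟩ : ∃ j, j ∉ topk u' := by
      by_contra h
      push_neg at h
      have : Finset.univ ⊆ topk u' := fun x _ => h x
      have := Finset.card_le_card this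
      simp at this
      omega
    have hjv : j ≠ v := fun h => hj (h ▸ hvin')
    have := htop u' v hvin' j hj
    simp only [u', if_pos rfl, if_neg hjv] at this
    linarith
  have hpos : 0 < P u v := by
    rw [hP, if_pos hvin]
    apply div_pos (Real.exp_pos _)
    apply Finset.sum_pos (fun j _ => Real.exp_pos _)
    exact ⟨v, hvin⟩
  have hzero : P u' v = 0 := by rw [hP, if_neg hvout]
  refine ⟨⟨u, u', hub, hub', v, hpos, hzero⟩, ?_⟩
  intro ε h
  have := h u u' hub hub' v
  rw [hzero, mul_zero] at this
  linarith
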